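/- Let f, h ∈ L²(ℝ; ℂ) with ∫|f(t)|² dt = ∫|h(t)|² dt = 1 and finite second moments ∫ t²|f(t)|² dt < ∞, ∫ t²|h(t)|² dt < ∞. Set e₁ = ∫ t|f(t)|² dt, e₂ = ∫ t|h(t)|² dt, σ₁ = ∫ (t − e₁)²|f(t)|² dt, σ₂ = ∫ (t − e₂)²|h(t)|² dt, and assume e₁ ≠ e₂. Then |∫ f(t) conj(h(t)) dt| ≤ 2√σ₁/|e₁ − e₂| + 2√σ₂/|e₁ − e₂| + 4√(σ₁σ₂)/(e₁ − e₂)². -/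

import Mathlib

open MeasureTheory

private lemma sq_norm_integrable {g : ℝ → ℂ} (hg : MemLp g 2 (volume : Measure ℝ)) :
    Integrable (fun t : ℝ => ‖g t‖ ^ 2) := by
  exact (memLp_two_iff_integrable_sq_norm hg.1).mp hg

private lemma var_integrable {g : ℝ → ℂ} (hg : MemLp g 2 (volume : Measure ℝ))
    (hg2 : Integrable (fun t : ℝ => t ^ 2 * ‖g t‖ ^ 2)) (e : ℝ) :
    Integrable (fun t : ℝ => (t - e) ^ 2 * ‖g t‖ ^ 2) := by
  have hm : AEStronglyMeasurable (fun t : ℝ => (t - e) ^ 2 * ‖g t‖ ^ 2) volume :=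
    (((continuous_id.sub continuous_const).pow 2).aestronglyMeasurable).mul
      ((hg.1.norm).pow 2)
  refine ((hg2.const_mul 2).add ((sq_norm_integrable hg).const_mul (2 * e ^ 2))).mono' hm ?_
  filter_upwards with t
  have h1 : (t - e) ^ 2 ≤ 2 * t ^ 2 + 2 * e ^ 2 := by nlinarith [sq_nonneg (t + e)]
  have h2 : (0:ℝ) ≤ ‖g t‖ ^ 2 := by positivity
  have : (t - e) ^ 2 * ‖g t‖ ^ 2 ≤ (2 * t ^ 2 + 2 * e ^ 2) * ‖g t‖ ^ 2 :=
    mul_le_mul_of_nonneg_right h1 h2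
  rw [Real.norm_of_nonneg (by positivity)]
  calc (t - e) ^ 2 * ‖g t‖ ^ 2 ≤ (2 * t ^ 2 + 2 * e ^ 2) * ‖g t‖ ^ 2 := this
    _ = 2 * (t ^ 2 * ‖g t‖ ^ 2) + 2 * e ^ 2 * ‖g t‖ ^ 2 := by ring

/-- Cauchy–Schwarz on a set. -/
private lemma cs_on_set {f h : ℝ → ℂ}
    (hf : MemLp f 2 (volume : Measure ℝ)) (hh : MemLp h 2 (volume : Measure ℝ))
    (s : Set ℝ) :
    ∫ t in s, ‖f t‖ * ‖h t‖ ≤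
      Real.sqrt (∫ t in s, ‖f t‖ ^ 2) * Real.sqrt (∫ t in s, ‖h t‖ ^ 2) := by
  have hpq : Real.HolderConjugate 2 2 := Real.HolderConjugate.two_two
  have h2 : (ENNReal.ofReal (2:ℝ)) = 2 := by norm_num
  have := integral_mul_norm_le_Lp_mul_Lq (μ := volume.restrict s) hpq
    (h2 ▸ hf.restrict s) (h2 ▸ hh.restrict s)
  have hfe : (∫ t in s, ‖f t‖ ^ (2:ℝ)) = ∫ t in s, ‖f t‖ ^ 2 := by
    refine integral_congr_ae (Filter.Eventually.of_forall fun t => ?_)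
    simp [Real.rpow_two]
  have hhe : (∫ t in s, ‖h t‖ ^ (2:ℝ)) = ∫ t in s, ‖h t‖ ^ 2 := by
    refine integral_congr_ae (Filter.Eventually.of_forall fun t => ?_)
    simp [Real.rpow_two]
  rw [hfe, hhe, Real.sqrt_eq_rpow, Real.sqrt_eq_rpow] at *
  simpa using this

private lemma tail_bound {g : ℝ → ℂ} (hg : MemLp g 2 (volume : Measure ℝ))
    (hg2 : Integrable (fun t : ℝ => t ^ 2 * ‖g t‖ ^ 2)) (e : ℝ)
    {s : Set ℝ} (hs : MeasurableSet s) {D : ℝ} (hD : 0 < D)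
    (hdist : ∀ t ∈ s, D / 2 ≤ |t - e|) :
    ∫ t in s, ‖g t‖ ^ 2 ≤ 4 * (∫ t : ℝ, (t - e) ^ 2 * ‖g t‖ ^ 2) / D ^ 2 := by
  have hvar := var_integrable hg hg2 e
  have step1 : ∫ t in s, ‖g t‖ ^ 2 ≤ ∫ t in s, (4 / D ^ 2) * ((t - e) ^ 2 * ‖g t‖ ^ 2) := by
    refine setIntegral_mono_on ((sq_norm_integrable hg).integrableOn)
      ((hvar.const_mul _).integrableOn) hs fun t ht => ?_
    have h1 : D / 2 ≤ |t - e| := hdist t ht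
    have h2 : (D / 2) ^ 2 ≤ (t - e) ^ 2 := by
      rw [← sq_abs (t - e)]
      exact pow_le_pow_left₀ (by positivity) h1 2
    have h3 : (0:ℝ) ≤ ‖g t‖ ^ 2 := by positivity
    have hD2 : (0:ℝ) < D ^ 2 := by positivity
    rw [div_mul_eq_mul_div, le_div_iff₀ hD2] at *
    nlinarith [sq_nonneg (t - e)]
  have step2 : ∫ t in s, (4 / D ^ 2) * ((t - e) ^ 2 * ‖g t‖ ^ 2)
      ≤ (4 / D ^ 2) * ∫ t : ℝ, (t - e) ^ 2 * ‖g t‖ ^ 2 := by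
    rw [integral_const_mul]
    refine mul_le_mul_of_nonneg_left ?_ (by positivity)
    exact setIntegral_le_integral hvar
      (Filter.Eventually.of_forall fun t => by positivity)
  calc ∫ t in s, ‖g t‖ ^ 2 ≤ _ := step1
    _ ≤ (4 / D ^ 2) * ∫ t : ℝ, (t - e) ^ 2 * ‖g t‖ ^ 2 := step2
    _ = 4 * (∫ t : ℝ, (t - e) ^ 2 * ‖g t‖ ^ 2) / D ^ 2 := by ring

/-- Chebyshev-type bound on the inner product of two unit-norm windows in
`L²(ℝ)` in terms of their position means and variances. -/
theorem stmt4 (f h : ℝ → ℂ)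
    (hf : MemLp f 2 (volume : Measure ℝ)) (hh : MemLp h 2 (volume : Measure ℝ))
    (hf1 : ∫ t : ℝ, ‖f t‖ ^ 2 = 1) (hh1 : ∫ t : ℝ, ‖h t‖ ^ 2 = 1)
    (hf2 : Integrable (fun t : ℝ => t ^ 2 * ‖f t‖ ^ 2))
    (hh2 : Integrable (fun t : ℝ => t ^ 2 * ‖h t‖ ^ 2))
    (e₁ e₂ σ₁ σ₂ : ℝ)
    (he₁ : e₁ = ∫ t : ℝ, t * ‖f t‖ ^ 2) (he₂ : e₂ = ∫ t : ℝ, t * ‖h t‖ ^ 2)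
    (hσ₁ : σ₁ = ∫ t : ℝ, (t - e₁) ^ 2 * ‖f t‖ ^ 2)
    (hσ₂ : σ₂ = ∫ t : ℝ, (t - e₂) ^ 2 * ‖h t‖ ^ 2)
    (hne : e₁ ≠ e₂) :
    ‖∫ t : ℝ, f t * (starRingEnd ℂ) (h t)‖ ≤
      2 * Real.sqrt σ₁ / |e₁ - e₂| + 2 * Real.sqrt σ₂ / |e₁ - e₂|
        + 4 * Real.sqrt (σ₁ * σ₂) / (e₁ - e₂) ^ 2 := by
  set D : ℝ := |e₁ - e₂| with hDdef
  have hD : 0 < D := abs_pos.mpr (sub_ne_zero.mpr hne)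
  set A : Set ℝ := Metric.ball e₁ (D / 2) with hAdef
  have hAmeas : MeasurableSet A := measurableSet_ball
  -- nonnegativity of variances
  have hσ₁0 : 0 ≤ σ₁ := by
    rw [hσ₁]; exact integral_nonneg fun t => by positivity
  have hσ₂0 : 0 ≤ σ₂ := by
    rw [hσ₂]; exact integral_nonneg fun t => by positivity
  -- step 1: bound by the integral of the product of norms
  have step1 : ‖∫ t : ℝ, f t * (starRingEnd ℂ) (h t)‖ ≤ ∫ t : ℝ, ‖f t‖ * ‖h t‖ := by
    refine le_trans (norm_integral_le_integral_norm _) (le_of_eq ?_)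
    refine integral_congr_ae (Filter.Eventually.of_forall fun t => ?_)
    simp [norm_mul]
  -- integrability of the product of norms
  have hprod : Integrable (fun t : ℝ => ‖f t‖ * ‖h t‖) := by
    refine (((sq_norm_integrable hf).add (sq_norm_integrable hh))).mono'
      (hf.1.norm.mul hh.1.norm) ?_
    filter_upwards with t
    simp only [Pi.add_apply]
    rw [Real.norm_of_nonneg (by positivity)]
    nlinarith [sq_nonneg (‖f t‖ - ‖h t‖)]
  -- split
  have hsplit : ∫ t : ℝ, ‖f t‖ * ‖h t‖
      = (∫ t in A, ‖f t‖ * ‖h t‖) + ∫ t in Aᶜ, ‖f t‖ * ‖h t‖ :=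
    (integral_add_compl hAmeas hprod).symm
  -- distance facts
  have hdistA : ∀ t ∈ A, D / 2 ≤ |t - e₂| := by
    intro t ht
    rw [hAdef, Metric.mem_ball, Real.dist_eq] at ht
    have : |e₁ - e₂| ≤ |e₁ - t| + |t - e₂| := by
      have := abs_sub_abs_le_abs_sub (e₁ - e₂) (t - e₂)
      calc |e₁ - e₂| = |(e₁ - t) + (t - e₂)| := by ring_nf
        _ ≤ |e₁ - t| + |t - e₂| := abs_add_le _ _
    rw [abs_sub_comm e₁ t] at this
    linarith [this]
  have hdistAc : ∀ t ∈ Aᶜ, D / 2 ≤ |t - e₁| := by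
    intro t ht
    rw [Set.mem_compl_iff, hAdef, Metric.mem_ball, Real.dist_eq, not_lt] at ht
    exact ht
  -- set-integral bounds on squares
  have hfA : ∫ t in Aᶜ, ‖f t‖ ^ 2 ≤ 4 * σ₁ / D ^ 2 := by
    rw [hσ₁]
    exact tail_bound hf hf2 e₁ hAmeas.compl hD hdistAc
  have hhA : ∫ t in A, ‖h t‖ ^ 2 ≤ 4 * σ₂ / D ^ 2 := by
    rw [hσ₂]
    exact tail_bound hh hh2 e₂ hAmeas hD hdistA
  have hfle1 : ∫ t in A, ‖f t‖ ^ 2 ≤ 1 := by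
    rw [← hf1]
    exact setIntegral_le_integral (sq_norm_integrable hf)
      (Filter.Eventually.of_forall fun t => by positivity)
  have hhle1 : ∫ t in Aᶜ, ‖h t‖ ^ 2 ≤ 1 := by
    rw [← hh1]
    exact setIntegral_le_integral (sq_norm_integrable hh)
      (Filter.Eventually.of_forall fun t => by positivity)
  -- sqrt computations
  have hsqrt : ∀ σ : ℝ, 0 ≤ σ → Real.sqrt (4 * σ / D ^ 2) = 2 * Real.sqrt σ / D := by
    intro σ hσ
    have heq : 4 * σ / D ^ 2 = (2 * Real.sqrt σ / D) ^ 2 := by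
      rw [div_pow, mul_pow, Real.sq_sqrt hσ]; ring
    rw [heq, Real.sqrt_sq (by positivity)]
  -- Cauchy-Schwarz on each piece
  have hcsA : ∫ t in A, ‖f t‖ * ‖h t‖ ≤ 2 * Real.sqrt σ₂ / D := by
    refine le_trans (cs_on_set hf hh A) ?_
    have h1 : Real.sqrt (∫ t in A, ‖f t‖ ^ 2) ≤ 1 := by
      rw [show (1:ℝ) = Real.sqrt 1 by simp]
      exact Real.sqrt_le_sqrt hfle1
    have h2 : Real.sqrt (∫ t in A, ‖h t‖ ^ 2) ≤ 2 * Real.sqrt σ₂ / D := by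
      rw [← hsqrt σ₂ hσ₂0]
      exact Real.sqrt_le_sqrt hhA
    calc Real.sqrt (∫ t in A, ‖f t‖ ^ 2) * Real.sqrt (∫ t in A, ‖h t‖ ^ 2)
        ≤ 1 * (2 * Real.sqrt σ₂ / D) :=
          mul_le_mul h1 h2 (Real.sqrt_nonneg _) (by norm_num)
      _ = 2 * Real.sqrt σ₂ / D := by ring
  have hcsAc : ∫ t in Aᶜ, ‖f t‖ * ‖h t‖ ≤ 2 * Real.sqrt σ₁ / D := by
    refine le_trans (cs_on_set hf hh Aᶜ) ?_
    have h1 : Real.sqrt (∫ t in Aᶜ, ‖f t‖ ^ 2) ≤ 2 * Real.sqrt σ₁ / D := by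
      rw [← hsqrt σ₁ hσ₁0]
      exact Real.sqrt_le_sqrt hfA
    have h2 : Real.sqrt (∫ t in Aᶜ, ‖h t‖ ^ 2) ≤ 1 := by
      rw [show (1:ℝ) = Real.sqrt 1 by simp]
      exact Real.sqrt_le_sqrt hhle1
    calc Real.sqrt (∫ t in Aᶜ, ‖f t‖ ^ 2) * Real.sqrt (∫ t in Aᶜ, ‖h t‖ ^ 2)
        ≤ (2 * Real.sqrt σ₁ / D) * 1 :=
          mul_le_mul h1 h2 (Real.sqrt_nonneg _) (by positivity)
      _ = 2 * Real.sqrt σ₁ / D := by ring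
  have hlast : 0 ≤ 4 * Real.sqrt (σ₁ * σ₂) / (e₁ - e₂) ^ 2 := by positivity
  calc ‖∫ t : ℝ, f t * (starRingEnd ℂ) (h t)‖
      ≤ ∫ t : ℝ, ‖f t‖ * ‖h t‖ := step1
    _ = (∫ t in A, ‖f t‖ * ‖h t‖) + ∫ t in Aᶜ, ‖f t‖ * ‖h t‖ := hsplit
    _ ≤ 2 * Real.sqrt σ₂ / D + 2 * Real.sqrt σ₁ / D := add_le_add hcsA hcsAc
    _ ≤ 2 * Real.sqrt σ₁ / |e₁ - e₂| + 2 * Real.sqrt σ₂ / |e₁ - e₂|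
        + 4 * Real.sqrt (σ₁ * σ₂) / (e₁ - e₂) ^ 2 := by
      rw [hDdef] at *
      linarith [hlast]
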